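/- For all m ≥ 1: ∑_{b=0}^{m} B_b(h_{m−b}[q^{-1}X]) = 0 in Sym[X], where (B_r F)[X] = F[X − (q−1)z^{-1}]·Exp[−zX]|_{z^r} (so B_0 is also defined, by taking the coefficient of z^0). -/

import Mathlib

/-!
STATEMENT 17: ∑_{b=0}^{m} B_b(h_{m−b}[q⁻¹X]) = 0 in Sym[X], for all m ≥ 1,
where (B_r F)[X] = F[X − (q−1)z⁻¹]·Exp[−zX]|_{z^r}.
Symmetric functions are presented in the power-sum basis (variable m ↦ p_{m+1}).
-/

noncomputable section
open MvPolynomial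

abbrev K : Type := RatFunc ℚ

noncomputable def q : K := RatFunc.X

/-- The ring of symmetric functions SymF[X] over ℚ(q), presented as the polynomial
ring on the power sums: the variable `m` stands for p_{m+1}. -/
abbrev SymF : Type := MvPolynomial ℕ K

/-- h_m[X] in the power-sum presentation, via Newton's identity
(m+1)·h_{m+1} = ∑_{i=1}^{m+1} p_i h_{m+1-i}. -/
noncomputable def Hh : ℕ → SymF
  | 0 => 1
  | (m+1) => (((m : K) + 1)⁻¹) •
      ∑ i ∈ Finset.range (m + 1), X i * Hh (m - i)
  decreasing_by exact Nat.lt_succ_of_le (Nat.sub_le m i)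

/-- e_m[X] in the power-sum presentation, via Newton's identity
(m+1)·e_{m+1} = ∑_{i=1}^{m+1} (-1)^{i-1} p_i e_{m+1-i}. -/
noncomputable def Ee : ℕ → SymF
  | 0 => 1
  | (m+1) => (((m : K) + 1)⁻¹) •
      ∑ i ∈ Finset.range (m + 1), ((-1 : K) ^ i) • (X i * Ee (m - i))
  decreasing_by exact Nat.lt_succ_of_le (Nat.sub_le m i)

/-- the plethystic evaluation F ↦ F[q⁻¹·X], i.e. p_m ↦ q^{-m} p_m. -/
noncomputable def qinvX : SymF →ₐ[K] SymF :=
  aeval (fun m : ℕ => ((q ^ (m + 1))⁻¹) • (X m : SymF))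

/-- h_n[q⁻¹X] -/
noncomputable def Hq (n : ℕ) : SymF := qinvX (Hh n)

/-- the substitution F[X] ↦ F[X − (q−1)z⁻¹], with `Polynomial.X` standing for z⁻¹:
p_m ↦ p_m − (q^m − 1)·z^{-m}. -/
noncomputable def phiB : SymF →ₐ[K] Polynomial SymF :=
  aeval (fun m : ℕ => Polynomial.C (X m : SymF) -
    Polynomial.C (MvPolynomial.C (q ^ (m + 1) - 1)) * Polynomial.X ^ (m + 1))

/-- the operator (B_r F)[X] = F[X−(q−1)z⁻¹]·Exp[−zX] |_{z^r}, using
Exp[−zX] = ∑_m (−1)^m e_m[X] z^m. -/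
noncomputable def Bop (r : ℕ) (F : SymF) : SymF :=
  ∑ j ∈ Finset.range ((phiB F).natDegree + 1),
    ((-1 : K) ^ (r + j)) • (Ee (r + j) * (phiB F).coeff j)

/-- the substitution F[X] ↦ F[X + (q⁻¹−1)z⁻¹], with `Polynomial.X` standing for z⁻¹:
p_m ↦ p_m + (q^{-m} − 1)·z^{-m}. -/
noncomputable def phiC : SymF →ₐ[K] Polynomial SymF :=
  aeval (fun m : ℕ => Polynomial.C (X m : SymF) +
    Polynomial.C (MvPolynomial.C ((q ^ (m + 1))⁻¹ - 1)) * Polynomial.X ^ (m + 1))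

/-- the operator (C_r F)[X] = −q^{1−r}·F[X+(q⁻¹−1)z⁻¹]·Exp[zX] |_{z^r}, using
Exp[zX] = ∑_m h_m[X] z^m. -/
noncomputable def Cop (r : ℕ) (F : SymF) : SymF :=
  (-(q * (q ^ r)⁻¹)) • ∑ j ∈ Finset.range ((phiC F).natDegree + 1),
    (phiC F).coeff j * Hh (r + j)

instance : CharZero K := charZero_of_injective_algebraMap (algebraMap ℚ K).injective

lemma natK_ne (m : ℕ) : ((m:K)+1) ≠ 0 := Nat.cast_add_one_ne_zero m

lemma Hh_newton (m : ℕ) : ((m:K)+1) • Hh (m+1) = ∑ i ∈ Finset.range (m+1), X i * Hh (m-i) := by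
  rw [Hh, smul_smul, mul_inv_cancel₀ (natK_ne m), one_smul]

lemma Ee_newton (m : ℕ) : ((m:K)+1) • Ee (m+1) = ∑ i ∈ Finset.range (m+1), ((-1:K)^i) • (X i * Ee (m-i)) := by
  rw [Ee, smul_smul, mul_inv_cancel₀ (natK_ne m), one_smul]

lemma Hh_eq_newton (m : ℕ) : Hh (m+1) = (((m:K)+1)⁻¹) • ∑ i ∈ Finset.range (m+1), X i * Hh (m-i) := by
  rw [← Hh_newton, smul_smul, inv_mul_cancel₀ (natK_ne m), one_smul]

lemma q_ne_zero : (q : K) ≠ 0 := RatFunc.X_ne_zero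

lemma qpow_ne (n : ℕ) : (q:K)^n ≠ 0 := pow_ne_zero n q_ne_zero

lemma Hq_eq : ∀ n, Hq n = ((q^n)⁻¹) • Hh n := by
  intro n
  induction n using Nat.strong_induction_on with
  | _ n ih =>
    match n with
    | 0 => simp [Hq, Hh, qinvX]
    | (m+1) =>
      show qinvX (Hh (m+1)) = _
      rw [Hh_eq_newton, map_smul, map_sum]
      have step : ∀ i ∈ Finset.range (m+1),
          qinvX (X i * Hh (m-i)) = ((q^(m+1))⁻¹) • (X i * Hh (m-i)) := by
        intro i hi
        rw [Finset.mem_range] at hi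
        have hIH : Hq (m-i) = ((q^(m-i))⁻¹) • Hh (m-i) :=
          ih (m-i) (Nat.lt_succ_of_le (Nat.sub_le m i))
        rw [map_mul]
        have hx : qinvX (X i) = ((q^(i+1))⁻¹) • (X i : SymF) := by
          simp [qinvX]
        have hh : qinvX (Hh (m-i)) = ((q^(m-i))⁻¹) • Hh (m-i) := hIH
        have hexp : (i+1) + (m-i) = m+1 := by omega
        rw [hx, hh, smul_mul_smul_comm, ← mul_inv, ← pow_add, hexp]
      rw [Finset.sum_congr rfl step, ← Finset.smul_sum,
        smul_smul, smul_smul, mul_comm]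

/-- k • h_k = ∑_{t<k} p_{t+1} h_{k-1-t}, valid for all k (k=0 trivial). -/
lemma NH : ∀ j : ℕ, ((j:K)) • Hh j = ∑ t ∈ Finset.range j, X t * Hh (j-1-t) := by
  intro j
  match j with
  | 0 => simp
  | (m+1) =>
    have := Hh_newton m
    rw [show ((m+1 : ℕ) : K) = (m:K)+1 by push_cast; ring, this]
    exact Finset.sum_congr rfl (fun t ht => by congr 1)

lemma NE : ∀ j : ℕ, ((j:K)) • Ee j = ∑ t ∈ Finset.range j, ((-1:K)^t) • (X t * Ee (j-1-t)) := by
  intro j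
  match j with
  | 0 => simp
  | (m+1) =>
    have := Ee_newton m
    rw [show ((m+1 : ℕ) : K) = (m:K)+1 by push_cast; ring, this]
    exact Finset.sum_congr rfl (fun t ht => by congr 2)

/-- triangular reindex: pairs (k,t) with t < k ≤ n  ↦  (t, a := k-1-t). -/
lemma sum_tri₁ {M : Type*} [AddCommMonoid M] (n : ℕ) (f : ℕ → ℕ → M) :
    ∑ k ∈ Finset.range (n+1), ∑ t ∈ Finset.range k, f k t
      = ∑ t ∈ Finset.range n, ∑ a ∈ Finset.range (n-t), f (t+a+1) t := by
  rw [Finset.sum_sigma', Finset.sum_sigma']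
  apply Finset.sum_nbij' (i := fun p => (⟨p.2, p.1 - p.2 - 1⟩ : Σ _ : ℕ, ℕ))
    (j := fun p => (⟨p.1 + p.2 + 1, p.1⟩ : Σ _ : ℕ, ℕ))
  · intro p hp
    simp only [Finset.mem_sigma, Finset.mem_range] at hp ⊢
    omega
  · intro p hp
    simp only [Finset.mem_sigma, Finset.mem_range] at hp ⊢
    omega
  · intro p hp
    obtain ⟨k, t⟩ := p
    simp only [Finset.mem_sigma, Finset.mem_range] at hp
    exact Sigma.ext (by simp; omega) (heq_of_eq rfl)
  · intro p hp
    obtain ⟨t, a⟩ := p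
    exact Sigma.ext rfl (heq_of_eq (by simp; omega))
  · intro p hp
    obtain ⟨k, t⟩ := p
    simp only [Finset.mem_sigma, Finset.mem_range] at hp
    show f k t = f (t + (k - t - 1) + 1) t
    have h1 : t + (k - t - 1) + 1 = k := by omega
    rw [h1]

/-- triangular swap: pairs (k,t) with k+t ≤ n-1. -/
lemma sum_tri₂ {M : Type*} [AddCommMonoid M] (n : ℕ) (f : ℕ → ℕ → M) :
    ∑ k ∈ Finset.range (n+1), ∑ t ∈ Finset.range (n-k), f k t
      = ∑ t ∈ Finset.range n, ∑ k ∈ Finset.range (n-t), f k t := by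
  rw [Finset.sum_sigma', Finset.sum_sigma']
  apply Finset.sum_nbij' (i := fun p => (⟨p.2, p.1⟩ : Σ _ : ℕ, ℕ))
    (j := fun p => (⟨p.2, p.1⟩ : Σ _ : ℕ, ℕ))
  · intro p hp
    simp only [Finset.mem_sigma, Finset.mem_range] at hp ⊢
    omega
  · intro p hp
    simp only [Finset.mem_sigma, Finset.mem_range] at hp ⊢
    omega
  · intro p hp; rfl
  · intro p hp; rfl
  · intro p hp; rfl

lemma sgn_aux (t a : ℕ) : ((-1:K))^(t+a+1) * (-1)^t = -((-1)^a) := by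
  rw [← pow_add, show t+a+1+t = 2*t + (a+1) by ring, pow_add, pow_mul,
    neg_one_sq, one_pow, pow_succ]
  ring

noncomputable def Acau (n : ℕ) : SymF :=
  ∑ k ∈ Finset.range (n+1), ((-1:K)^k) • (Ee k * Hh (n-k))

lemma Acau_zero (n : ℕ) (hn : 1 ≤ n) : Acau n = 0 := by
  have key : (n:K) • Acau n = 0 := by
    rw [Acau, Finset.smul_sum]
    have split : ∀ k ∈ Finset.range (n+1),
        (n:K) • (((-1:K)^k) • (Ee k * Hh (n-k)))
          = ((-1:K)^k) • ((((k:K)) • Ee k) * Hh (n-k))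
            + ((-1:K)^k) • (Ee k * ((((n-k : ℕ):K)) • Hh (n-k))) := by
      intro k hk
      rw [Finset.mem_range] at hk
      have hc : ((k:K)) + (((n-k:ℕ)):K) = (n:K) := by
        rw [← Nat.cast_add]; congr 1; omega
      rw [smul_mul_assoc, mul_smul_comm, ← smul_add, ← add_smul, hc, smul_comm]
    rw [Finset.sum_congr rfl split, Finset.sum_add_distrib]
    have e1 : ∑ k ∈ Finset.range (n+1), ((-1:K)^k) • ((((k:K)) • Ee k) * Hh (n-k))
        = ∑ k ∈ Finset.range (n+1), ∑ t ∈ Finset.range k,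
            ((-1:K)^k) • ((((-1:K)^t) • (X t * Ee (k-1-t))) * Hh (n-k)) := by
      apply Finset.sum_congr rfl
      intro k _
      rw [NE, Finset.sum_mul, Finset.smul_sum]
    have e2 : ∑ k ∈ Finset.range (n+1), ((-1:K)^k) • (Ee k * ((((n-k:ℕ):K)) • Hh (n-k)))
        = ∑ k ∈ Finset.range (n+1), ∑ t ∈ Finset.range (n-k),
            ((-1:K)^k) • (Ee k * (X t * Hh (n-k-1-t))) := by
      apply Finset.sum_congr rfl
      intro k _
      rw [NH, Finset.mul_sum, Finset.smul_sum]
    rw [e1, e2, sum_tri₁ n (fun k t => ((-1:K)^k) • ((((-1:K)^t) • (X t * Ee (k-1-t))) * Hh (n-k))),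
      sum_tri₂ n (fun k t => ((-1:K)^k) • (Ee k * (X t * Hh (n-k-1-t)))),
      ← Finset.sum_add_distrib]
    apply Finset.sum_eq_zero
    intro t ht
    rw [← Finset.sum_add_distrib]
    apply Finset.sum_eq_zero
    intro a ha
    have i1 : t+a+1-1-t = a := by omega
    have i2 : n-(t+a+1) = n-a-1-t := by omega
    rw [i1, i2, smul_mul_assoc, smul_smul, sgn_aux]
    rw [neg_smul, neg_add_eq_zero]
    congr 1
    ring
  have hn' : (n:K) ≠ 0 := Nat.cast_ne_zero.mpr (by omega)
  exact (smul_eq_zero.mp key).resolve_left hn'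

/-- reindex pairs (i,k), i+k ≤ n-1, to (j := i+k, i). -/
lemma sum_tri₃ {M : Type*} [AddCommMonoid M] (n : ℕ) (f : ℕ → ℕ → M) :
    ∑ i ∈ Finset.range (n+1), ∑ k ∈ Finset.range (n-i), f i k
      = ∑ j ∈ Finset.range n, ∑ i ∈ Finset.range (j+1), f i (j-i) := by
  rw [Finset.sum_sigma', Finset.sum_sigma']
  apply Finset.sum_nbij' (i := fun p => (⟨p.1 + p.2, p.1⟩ : Σ _ : ℕ, ℕ))
    (j := fun p => (⟨p.2, p.1 - p.2⟩ : Σ _ : ℕ, ℕ))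
  · intro p hp
    obtain ⟨i, k⟩ := p
    simp only [Finset.mem_sigma, Finset.mem_range] at hp ⊢
    omega
  · intro p hp
    obtain ⟨j, i⟩ := p
    simp only [Finset.mem_sigma, Finset.mem_range] at hp ⊢
    omega
  · intro p hp
    obtain ⟨i, k⟩ := p
    exact Sigma.ext (by simp) (heq_of_eq (by simp))
  · intro p hp
    obtain ⟨j, i⟩ := p
    simp only [Finset.mem_sigma, Finset.mem_range] at hp
    exact Sigma.ext (by simp; omega) (heq_of_eq rfl)
  · intro p hp
    obtain ⟨i, k⟩ := p
    show f i k = f i (i + k - i)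
    simp

noncomputable def kk (a : K) : Polynomial SymF := Polynomial.C (MvPolynomial.C a)

lemma kk_mul (a b : K) : kk (a*b) = kk a * kk b := by simp [kk]

noncomputable def gs (j : ℕ) : K := ∑ i ∈ Finset.range j, (q^(i+1) - 1)

lemma gs_eq (j : ℕ) : (q-1) * gs j = q^(j+1) - q - (q-1)*(j:K) := by
  induction j with
  | zero => simp [gs]
  | succ t ih =>
    rw [gs, Finset.sum_range_succ, ← gs, mul_add, ih]
    push_cast
    ring

noncomputable def SigB (n : ℕ) : Polynomial SymF :=
  ∑ k ∈ Finset.range n, Polynomial.X^(k+1) * Polynomial.C (Hh (n-1-k))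

noncomputable def RB (n : ℕ) : Polynomial SymF :=
  Polynomial.C (Hh n) - kk (q-1) * SigB n

lemma phiB_X (i : ℕ) :
    phiB (X i) = Polynomial.C (X i) - kk (q^(i+1) - 1) * Polynomial.X^(i+1) := by
  simp [phiB, kk]


lemma T1_eq (m : ℕ) :
    ∑ i ∈ Finset.range (m+1), Polynomial.C (X i) * Polynomial.C (Hh (m-i))
      = kk ((m:K)+1) * Polynomial.C (Hh (m+1)) := by
  have : ∑ i ∈ Finset.range (m+1), Polynomial.C (X i) * Polynomial.C (Hh (m-i))
      = Polynomial.C (∑ i ∈ Finset.range (m+1), X i * Hh (m-i)) := by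
    rw [map_sum]
    exact Finset.sum_congr rfl (fun i _ => (map_mul Polynomial.C _ _).symm)
  rw [this, ← Hh_newton, MvPolynomial.smul_eq_C_mul, map_mul, kk]

lemma T2_eq (m : ℕ) :
    ∑ i ∈ Finset.range (m+1), Polynomial.C (X i) * (kk (q-1) * SigB (m-i))
      = ∑ k ∈ Finset.range (m+1),
          kk ((q-1) * (((m-k:ℕ)):K)) * (Polynomial.X^(k+1) * Polynomial.C (Hh (m-k))) := by
  have step : ∀ i ∈ Finset.range (m+1),
      Polynomial.C (X i) * (kk (q-1) * SigB (m-i))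
        = kk (q-1) * ∑ k ∈ Finset.range (m-i),
            Polynomial.X^(k+1) * Polynomial.C (X i * Hh (m-i-1-k)) := by
    intro i _
    rw [SigB, mul_left_comm, Finset.mul_sum]
    refine congrArg (fun s => kk (q-1) * s) ?_
    refine Finset.sum_congr rfl (fun k _ => ?_)
    rw [map_mul]
    ring
  rw [Finset.sum_congr rfl step, ← Finset.mul_sum,
    sum_tri₂ m (fun i k => Polynomial.X^(k+1) * Polynomial.C (X i * Hh (m-i-1-k)))]
  have inner : ∀ k ∈ Finset.range m,
      ∑ i ∈ Finset.range (m-k), Polynomial.X^(k+1) * Polynomial.C (X i * Hh (m-i-1-k))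
        = kk (((m-k:ℕ)):K) * (Polynomial.X^(k+1) * Polynomial.C (Hh (m-k))) := by
    intro k _
    rw [← Finset.mul_sum, ← map_sum]
    have harg : ∑ i ∈ Finset.range (m-k), X i * Hh (m-i-1-k)
        = ∑ i ∈ Finset.range (m-k), X i * Hh ((m-k)-1-i) := by
      refine Finset.sum_congr rfl (fun i _ => ?_)
      congr 2
      omega
    rw [harg, ← NH (m-k), MvPolynomial.smul_eq_C_mul, map_mul, kk]
    ring
  rw [Finset.sum_congr rfl inner]
  have ext : ∑ k ∈ Finset.range (m+1),
        kk (((m-k:ℕ)):K) * (Polynomial.X^(k+1) * Polynomial.C (Hh (m-k)))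
      = ∑ k ∈ Finset.range m,
        kk (((m-k:ℕ)):K) * (Polynomial.X^(k+1) * Polynomial.C (Hh (m-k))) := by
    rw [Finset.sum_range_succ, Nat.sub_self]
    simp [kk]
  rw [← ext, Finset.mul_sum]
  refine Finset.sum_congr rfl (fun k _ => ?_)
  rw [kk_mul]
  ring

lemma T4_eq (m : ℕ) :
    ∑ i ∈ Finset.range (m+1),
        kk (q^(i+1)-1) * Polynomial.X^(i+1) * (kk (q-1) * SigB (m-i))
      = ∑ k ∈ Finset.range (m+1),
          kk ((q-1) * gs k) * (Polynomial.X^(k+1) * Polynomial.C (Hh (m-k))) := by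
  have step : ∀ i ∈ Finset.range (m+1),
      kk (q^(i+1)-1) * Polynomial.X^(i+1) * (kk (q-1) * SigB (m-i))
        = kk (q-1) * ∑ k ∈ Finset.range (m-i),
            kk (q^(i+1)-1) * (Polynomial.X^(i+k+2) * Polynomial.C (Hh (m-i-1-k))) := by
    intro i _
    rw [SigB]
    simp only [Finset.mul_sum]
    refine Finset.sum_congr rfl (fun k _ => ?_)
    rw [show i+k+2 = (i+1)+(k+1) from by omega, pow_add]
    ring
  rw [Finset.sum_congr rfl step, ← Finset.mul_sum,
    sum_tri₃ m (fun i k => kk (q^(i+1)-1) * (Polynomial.X^(i+k+2) * Polynomial.C (Hh (m-i-1-k))))]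
  have inner : ∀ j ∈ Finset.range m,
      ∑ i ∈ Finset.range (j+1),
          kk (q^(i+1)-1) * (Polynomial.X^(i+(j-i)+2) * Polynomial.C (Hh (m-i-1-(j-i))))
        = kk (gs (j+1)) * (Polynomial.X^(j+2) * Polynomial.C (Hh (m-1-j))) := by
    intro j _
    have fix : ∀ i ∈ Finset.range (j+1),
        kk (q^(i+1)-1) * (Polynomial.X^(i+(j-i)+2) * Polynomial.C (Hh (m-i-1-(j-i))))
          = kk (q^(i+1)-1) * (Polynomial.X^(j+2) * Polynomial.C (Hh (m-1-j))) := by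
      intro i hi
      rw [Finset.mem_range] at hi
      have e1 : i+(j-i)+2 = j+2 := by omega
      have e2 : m-i-1-(j-i) = m-1-j := by omega
      rw [e1, e2]
    rw [Finset.sum_congr rfl fix, ← Finset.sum_mul]
    congr 1
    simp only [gs, kk, map_sum]
  rw [Finset.sum_congr rfl inner, Finset.mul_sum]
  have push : ∀ j ∈ Finset.range m,
      kk (q-1) * (kk (gs (j+1)) * (Polynomial.X^(j+2) * Polynomial.C (Hh (m-1-j))))
        = kk ((q-1) * gs (j+1)) * (Polynomial.X^(j+2) * Polynomial.C (Hh (m-1-j))) := by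
    intro j _
    rw [kk_mul]
    ring
  rw [Finset.sum_congr rfl push,
    Finset.sum_range_succ' (fun k => kk ((q-1) * gs k) * (Polynomial.X^(k+1) * Polynomial.C (Hh (m-k)))) m]
  have f0 : kk ((q-1) * gs 0) * (Polynomial.X^(0+1) * Polynomial.C (Hh (m-0))) = 0 := by
    simp [gs, kk]
  rw [f0, add_zero]
  refine Finset.sum_congr rfl (fun j _ => ?_)
  have e3 : m - (j+1) = m-1-j := by omega
  rw [e3]

lemma kk_add (a b : K) : kk (a+b) = kk a + kk b := by simp [kk]
lemma kk_sub (a b : K) : kk (a-b) = kk a - kk b := by simp [kk]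

lemma kk_smul (a : K) (P : Polynomial SymF) : a • P = kk a * P := by
  rw [Algebra.smul_def]
  congr 1

lemma keyB (m : ℕ) :
    ∑ i ∈ Finset.range (m+1),
        (Polynomial.C (X i) - kk (q^(i+1) - 1) * Polynomial.X^(i+1)) * RB (m-i)
      = ((m:K)+1) • RB (m+1) := by
  have expand : ∀ i ∈ Finset.range (m+1),
      (Polynomial.C (X i) - kk (q^(i+1) - 1) * Polynomial.X^(i+1)) * RB (m-i)
        = Polynomial.C (X i) * Polynomial.C (Hh (m-i))
          - Polynomial.C (X i) * (kk (q-1) * SigB (m-i))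
          - kk (q^(i+1)-1) * Polynomial.X^(i+1) * Polynomial.C (Hh (m-i))
          + kk (q^(i+1)-1) * Polynomial.X^(i+1) * (kk (q-1) * SigB (m-i)) := by
    intro i _
    rw [RB]
    ring
  rw [Finset.sum_congr rfl expand, Finset.sum_add_distrib, Finset.sum_sub_distrib,
    Finset.sum_sub_distrib, T1_eq, T2_eq, T4_eq]
  have T3' : ∑ i ∈ Finset.range (m+1),
      kk (q^(i+1)-1) * Polynomial.X^(i+1) * Polynomial.C (Hh (m-i))
        = ∑ k ∈ Finset.range (m+1),
            kk (q^(k+1)-1) * (Polynomial.X^(k+1) * Polynomial.C (Hh (m-k))) :=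
    Finset.sum_congr rfl (fun k _ => by ring)
  rw [T3']
  have RHS_eq : ((m:K)+1) • RB (m+1)
      = kk ((m:K)+1) * Polynomial.C (Hh (m+1))
        - ∑ k ∈ Finset.range (m+1),
            kk (((m:K)+1)*(q-1)) * (Polynomial.X^(k+1) * Polynomial.C (Hh (m-k))) := by
    rw [RB, smul_sub, kk_smul, kk_smul, SigB]
    simp only [Nat.add_sub_cancel]
    rw [Finset.mul_sum, Finset.mul_sum]
    rw [sub_right_inj]
    refine Finset.sum_congr rfl (fun k _ => ?_)
    rw [kk_mul]
    ring
  rw [RHS_eq]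
  have combine : (∑ k ∈ Finset.range (m+1),
        kk ((q-1) * (((m-k:ℕ)):K)) * (Polynomial.X^(k+1) * Polynomial.C (Hh (m-k))))
      + (∑ k ∈ Finset.range (m+1),
        kk (q^(k+1)-1) * (Polynomial.X^(k+1) * Polynomial.C (Hh (m-k))))
      - (∑ k ∈ Finset.range (m+1),
        kk ((q-1) * gs k) * (Polynomial.X^(k+1) * Polynomial.C (Hh (m-k))))
      = ∑ k ∈ Finset.range (m+1),
        kk (((m:K)+1)*(q-1)) * (Polynomial.X^(k+1) * Polynomial.C (Hh (m-k))) := by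
    rw [← Finset.sum_add_distrib, ← Finset.sum_sub_distrib]
    refine Finset.sum_congr rfl (fun k hk => ?_)
    rw [Finset.mem_range] at hk
    have hsc : (q-1) * (((m-k:ℕ)):K) + (q^(k+1)-1) - (q-1) * gs k = ((m:K)+1)*(q-1) := by
      rw [gs_eq, Nat.cast_sub (Nat.lt_succ_iff.mp hk)]
      ring
    rw [← add_mul, ← sub_mul, ← kk_add, ← kk_sub, hsc]
  rw [← combine]
  ring

lemma phiB_Hh_pf : ∀ n, phiB (Hh n) = RB n := by
  intro n
  induction n using Nat.strong_induction_on with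
  | _ n ih =>
    match n with
    | 0 =>
      rw [RB, SigB, show Hh 0 = 1 from by rw [Hh]]
      simp
    | (m+1) =>
      have h : ((m:K)+1) • phiB (Hh (m+1)) = ((m:K)+1) • RB (m+1) := by
        rw [← map_smul, Hh_newton, map_sum, ← keyB m]
        refine Finset.sum_congr rfl (fun i hi => ?_)
        rw [map_mul, phiB_X, ih (m-i) (Nat.lt_succ_of_le (Nat.sub_le m i))]
      calc phiB (Hh (m+1))
          = ((m:K)+1)⁻¹ • (((m:K)+1) • phiB (Hh (m+1))) := by
            rw [smul_smul, inv_mul_cancel₀ (natK_ne m), one_smul]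
        _ = ((m:K)+1)⁻¹ • (((m:K)+1) • RB (m+1)) := by rw [h]
        _ = RB (m+1) := by rw [smul_smul, inv_mul_cancel₀ (natK_ne m), one_smul]

lemma SigB_coeff (n j : ℕ) :
    (SigB n).coeff j = if 1 ≤ j ∧ j ≤ n then Hh (n-j) else 0 := by
  rw [SigB, Polynomial.finset_sum_coeff]
  have per : ∀ k ∈ Finset.range n, (Polynomial.X^(k+1) * Polynomial.C (Hh (n-1-k))).coeff j
      = if k = j - 1 ∧ 1 ≤ j then Hh (n-j) else 0 := by
    intro k hk
    rw [Finset.mem_range] at hk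
    rw [mul_comm, Polynomial.coeff_mul_X_pow']
    by_cases h : k+1 ≤ j
    · rw [if_pos h, Polynomial.coeff_C]
      by_cases h2 : j - (k+1) = 0
      · rw [if_pos h2, if_pos (by omega : k = j - 1 ∧ 1 ≤ j)]
        congr 1
        omega
      · rw [if_neg h2, if_neg (by omega)]
    · rw [if_neg h, if_neg (by omega)]
  rw [Finset.sum_congr rfl per]
  by_cases hj : 1 ≤ j ∧ j ≤ n
  · rw [if_pos hj]
    have per2 : ∀ k ∈ Finset.range n,
        (if k = j - 1 ∧ 1 ≤ j then Hh (n-j) else 0) = if k = j-1 then Hh (n-j) else 0 := by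
      intro k _
      by_cases hk2 : k = j-1
      · rw [if_pos ⟨hk2, hj.1⟩, if_pos hk2]
      · rw [if_neg (by tauto), if_neg hk2]
    rw [Finset.sum_congr rfl per2, Finset.sum_ite_eq' (Finset.range n) (j-1)]
    rw [if_pos (Finset.mem_range.mpr (by omega))]
  · rw [if_neg hj]
    refine Finset.sum_eq_zero (fun k hk => ?_)
    rw [Finset.mem_range] at hk
    rw [if_neg (by omega)]

lemma RB_coeff (n j : ℕ) :
    (RB n).coeff j = (if j = 0 then Hh n else 0)
      - (if 1 ≤ j ∧ j ≤ n then (q-1) • Hh (n-j) else 0) := by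
  rw [RB, Polynomial.coeff_sub, Polynomial.coeff_C]
  congr 1
  rw [kk, Polynomial.coeff_C_mul, SigB_coeff, mul_ite, mul_zero]
  by_cases hj : 1 ≤ j ∧ j ≤ n
  · rw [if_pos hj, if_pos hj, MvPolynomial.smul_eq_C_mul]
  · rw [if_neg hj, if_neg hj]

lemma RB_natDegree_le (n : ℕ) : (RB n).natDegree ≤ n := by
  apply Polynomial.natDegree_le_iff_coeff_eq_zero.mpr
  intro j hj
  rw [RB_coeff, if_neg (by omega), if_neg (by omega), sub_zero]

lemma phiB_Hq (n : ℕ) : phiB (Hq n) = ((q^n)⁻¹) • RB n := by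
  rw [Hq_eq, map_smul, phiB_Hh_pf]

lemma phiB_Hq_natDeg (n : ℕ) : (phiB (Hq n)).natDegree ≤ n := by
  apply Polynomial.natDegree_le_iff_coeff_eq_zero.mpr
  intro j hj
  rw [phiB_Hq, Polynomial.coeff_smul, RB_coeff, if_neg (by omega), if_neg (by omega),
    sub_zero, smul_zero]

lemma Bop_eq (r : ℕ) (F : SymF) (N : ℕ) (h : (phiB F).natDegree ≤ N) :
    Bop r F = ∑ j ∈ Finset.range (N+1),
      ((-1 : K) ^ (r + j)) • (Ee (r + j) * (phiB F).coeff j) := by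
  rw [Bop]
  apply Finset.sum_subset
  · exact Finset.range_subset_range.mpr (by omega)
  · intro x _ hnx
    rw [Finset.mem_range] at hnx
    rw [Polynomial.coeff_eq_zero_of_natDegree_lt (by omega), mul_zero, smul_zero]

lemma Bop_Hq (r n : ℕ) :
    Bop r (Hq n) = ((q^n)⁻¹) • ( ((-1:K)^r) • (Ee r * Hh n)
      - ∑ j ∈ Finset.range n,
          ((q-1) * (-1:K)^(r+(j+1))) • (Ee (r+(j+1)) * Hh (n-(j+1))) ) := by
  rw [Bop_eq r (Hq n) n (phiB_Hq_natDeg n)]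
  have per : ∀ j ∈ Finset.range (n+1),
      ((-1:K)^(r+j)) • (Ee (r+j) * (phiB (Hq n)).coeff j)
        = (q^n)⁻¹ • (((-1:K)^(r+j)) • (Ee (r+j) * (RB n).coeff j)) := by
    intro j _
    rw [phiB_Hq, Polynomial.coeff_smul, mul_smul_comm, smul_comm]
  rw [Finset.sum_congr rfl per, ← Finset.smul_sum]
  congr 1
  rw [Finset.sum_range_succ' (fun j => ((-1:K)^(r+j)) • (Ee (r+j) * (RB n).coeff j)) n]
  have h0 : ((-1:K)^(r+0)) • (Ee (r+0) * (RB n).coeff 0) = ((-1:K)^r) • (Ee r * Hh n) := by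
    rw [RB_coeff]
    simp
  have h1 : ∀ j ∈ Finset.range n,
      ((-1:K)^(r+(j+1))) • (Ee (r+(j+1)) * (RB n).coeff (j+1))
        = -(((q-1) * (-1:K)^(r+(j+1))) • (Ee (r+(j+1)) * Hh (n-(j+1)))) := by
    intro j hj
    rw [Finset.mem_range] at hj
    rw [RB_coeff, if_neg (by omega), if_pos (by omega), zero_sub]
    rw [mul_neg, smul_neg, mul_smul_comm, smul_smul, mul_comm]
  rw [Finset.sum_congr rfl h1, h0, Finset.sum_neg_distrib]
  rw [add_comm, ← sub_eq_add_neg]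

theorem sum_Bb_Hq_eq_zero :
    ∀ m : ℕ, 1 ≤ m →
      ∑ b ∈ Finset.range (m + 1), Bop b (Hq (m - b)) = 0 := by
  intro m hm
  have key : (q^m) • ∑ b ∈ Finset.range (m+1), Bop b (Hq (m-b)) = 0 := by
    rw [Finset.smul_sum]
    have per : ∀ b ∈ Finset.range (m+1),
        (q^m) • Bop b (Hq (m-b))
          = ((q^b * (-1:K)^b) • (Ee b * Hh (m-b)))
            - ∑ j ∈ Finset.range (m-b),
                (q^b * ((q-1) * (-1:K)^(b+(j+1)))) • (Ee (b+(j+1)) * Hh ((m-b)-(j+1))) := by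
      intro b hb
      rw [Finset.mem_range] at hb
      rw [Bop_Hq, smul_smul]
      have e : q^m * (q^(m-b))⁻¹ = q^b := by
        have e' : q^b * q^(m-b) = q^m := by rw [← pow_add]; congr 1; omega
        rw [← e', mul_assoc, mul_inv_cancel₀ (qpow_ne _), mul_one]
      rw [e, smul_sub, Finset.smul_sum]
      congr 1
      · rw [smul_smul]
      · exact Finset.sum_congr rfl (fun j _ => by rw [smul_smul])
    rw [Finset.sum_congr rfl per, Finset.sum_sub_distrib]
    rw [sum_tri₃ m (fun b j =>
      (q^b * ((q-1) * (-1:K)^(b+(j+1)))) • (Ee (b+(j+1)) * Hh ((m-b)-(j+1))))]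
    have inner : ∀ s ∈ Finset.range m,
        ∑ b ∈ Finset.range (s+1),
            (q^b * ((q-1) * (-1:K)^(b+((s-b)+1)))) • (Ee (b+((s-b)+1)) * Hh ((m-b)-((s-b)+1)))
          = ((q^(s+1) - 1) * (-1:K)^(s+1)) • (Ee (s+1) * Hh (m-(s+1))) := by
      intro s hs
      have fix : ∀ b ∈ Finset.range (s+1),
          (q^b * ((q-1) * (-1:K)^(b+((s-b)+1)))) • (Ee (b+((s-b)+1)) * Hh ((m-b)-((s-b)+1)))
            = (q^b * ((q-1) * (-1:K)^(s+1))) • (Ee (s+1) * Hh (m-(s+1))) := by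
        intro b hb
        rw [Finset.mem_range] at hb
        have e1 : b + ((s-b)+1) = s+1 := by omega
        have e2 : (m-b) - ((s-b)+1) = m - (s+1) := by omega
        rw [e1, e2]
      rw [Finset.sum_congr rfl fix, ← Finset.sum_smul]
      congr 1
      rw [show (∑ b ∈ Finset.range (s+1), q^b * ((q-1) * (-1:K)^(s+1)))
          = (∑ b ∈ Finset.range (s+1), q^b) * (q-1) * (-1:K)^(s+1) from by
        rw [Finset.sum_mul, Finset.sum_mul]
        exact Finset.sum_congr rfl (fun b _ => by ring)]
      rw [geom_sum_mul]
    rw [Finset.sum_congr rfl inner]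
    have shift : ∑ k ∈ Finset.range (m+1), ((q^k - 1) * (-1:K)^k) • (Ee k * Hh (m-k))
        = ∑ s ∈ Finset.range m, ((q^(s+1) - 1) * (-1:K)^(s+1)) • (Ee (s+1) * Hh (m-(s+1))) := by
      rw [Finset.sum_range_succ' (fun k => ((q^k - 1) * (-1:K)^k) • (Ee k * Hh (m-k))) m]
      simp
    rw [← shift, ← Finset.sum_sub_distrib]
    have final : ∀ k ∈ Finset.range (m+1),
        (q^k * (-1:K)^k) • (Ee k * Hh (m-k)) - ((q^k - 1) * (-1:K)^k) • (Ee k * Hh (m-k))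
          = ((-1:K)^k) • (Ee k * Hh (m-k)) := by
      intro k _
      rw [← sub_smul]
      congr 1
      ring
    rw [Finset.sum_congr rfl final]
    have : ∑ k ∈ Finset.range (m+1), ((-1:K)^k) • (Ee k * Hh (m-k)) = Acau m := rfl
    rw [this, Acau_zero m hm]
  rcases smul_eq_zero.mp key with h|h
  · exact absurd h (qpow_ne m)
  · exact h

end
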